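/- The intersection ⋂_{i=1}^{n} L[M_i] is empty if and only if the set of reset words of the DFA 𝒜 equals I, i.e. Syn(𝒜) = I. -/

import Mathlib

/-- The transition function of a DFA extended to words (read left to right). -/
def deltaStar {Q A : Type} (δ : Q → A → Q) (q : Q) (w : List A) : Q :=
  w.foldl δ q

/-- `w` is a reset word for the DFA with transition function `δ`. -/
def IsReset {Q A : Type} (δ : Q → A → Q) (w : List A) : Prop :=
  ∀ q q' : Q, deltaStar δ q w = deltaStar δ q' w

/-- The set of reset words of a DFA. -/
def Syn {Q A : Type} (δ : Q → A → Q) : Set (List A) :=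
  {w | IsReset δ w}

/-- The alphabet Δ = Σ ∪ {x,y,z}: `Sum.inl a` is a letter of Σ, and
`Sum.inr 0`, `Sum.inr 1`, `Sum.inr 2` are the new letters x, y, z. -/
abbrev Alph (σ : Type) : Type := σ ⊕ Fin 3

def xL {σ : Type} : Alph σ := Sum.inr 0
def yL {σ : Type} : Alph σ := Sum.inr 1
def zL {σ : Type} : Alph σ := Sum.inr 2

/-- The state set Q of the DFA 𝒜: the disjoint union of the state sets `Qst i`
of the DFAs `M i`, together with two new states: `Sum.inr false` is the sink `s`
and `Sum.inr true` is the state `h`. -/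
abbrev StA {n : ℕ} (Qst : Fin n → Type) : Type := (Σ i, Qst i) ⊕ Bool

def sA {n : ℕ} {Qst : Fin n → Type} : StA Qst := Sum.inr false
def hA {n : ℕ} {Qst : Fin n → Type} : StA Qst := Sum.inr true

/-- The transition function φ of the DFA 𝒜. -/
def phi {n : ℕ} {σ : Type} {Qst : Fin n → Type}
    (δi : ∀ i, Qst i → σ → Qst i) (qinit : ∀ i, Qst i)
    (Fi : ∀ i, Set (Qst i)) [∀ i, DecidablePred (· ∈ Fi i)] :
    StA Qst → Alph σ → StA Qst
  | Sum.inl ⟨i, q⟩, Sum.inl a => Sum.inl ⟨i, δi i q a⟩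
  | Sum.inl ⟨i, q⟩, Sum.inr k =>
      if k = 0 then Sum.inl ⟨i, qinit i⟩          -- φ(q, x) = qᵢ
      else if k = 1 then sA                        -- φ(q, y) = s
      else if q ∈ Fi i then sA else hA             -- φ(q, z) = s on Fᵢ, h off Fᵢ
  | Sum.inr _, _ => sA                             -- φ(s,·) = φ(h,·) = s

/-- The language accepted by the DFA `M i = ⟨Qst i, σ, δi i, qinit i, Fi i⟩`. -/
def LM {n : ℕ} {σ : Type} {Qst : Fin n → Type}
    (δi : ∀ i, Qst i → σ → Qst i) (qinit : ∀ i, Qst i)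
    (Fi : ∀ i, Set (Qst i)) (i : Fin n) : Set (List σ) :=
  {w | deltaStar (δi i) (qinit i) w ∈ Fi i}

/-- `w ∈ (Σ ∪ {x})*`, i.e. `w` contains no occurrence of the letters y and z. -/
def noYZ {σ : Type} (w : List (Alph σ)) : Prop := yL ∉ w ∧ zL ∉ w

/-- L₁ = (Σ∪{x})* y Δ* -/
def L1 {σ : Type} : Set (List (Alph σ)) :=
  {w | ∃ u v, noYZ u ∧ w = u ++ yL :: v}

/-- L₂ = (Σ∪{x})* z Δ⁺ -/
def L2 {σ : Type} : Set (List (Alph σ)) :=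
  {w | ∃ u v, noYZ u ∧ v ≠ [] ∧ w = u ++ zL :: v}

/-- The ideal language I = L₁ ∪ L₂. -/
def ISet {σ : Type} : Set (List (Alph σ)) := L1 ∪ L2


section Aux

variable {n : ℕ} {σ : Type} {Qst : Fin n → Type}
  (δi : ∀ i, Qst i → σ → Qst i) (qinit : ∀ i, Qst i)
  (Fi : ∀ i, Set (Qst i)) [∀ i, DecidablePred (· ∈ Fi i)]

/-- The run inside component `i`, for words without y,z (any `inr` letter acts as x). -/
def gRun (i : Fin n) (q : Qst i) (u : List (Alph σ)) : Qst i :=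
  u.foldl (fun p c => match c with
    | Sum.inl a => δi i p a
    | Sum.inr _ => qinit i) q

lemma deltaStar_append {Q A : Type} (δ : Q → A → Q) (q : Q) (u v : List A) :
    deltaStar δ q (u ++ v) = deltaStar δ (deltaStar δ q u) v := by
  simp [deltaStar, List.foldl_append]

lemma deltaStar_cons {Q A : Type} (δ : Q → A → Q) (q : Q) (a : A) (w : List A) :
    deltaStar δ q (a :: w) = deltaStar δ (δ q a) w := rfl

lemma phi_inr (b : Bool) (a : Alph σ) : phi δi qinit Fi (Sum.inr b) a = sA := rfl

lemma sink_run (w : List (Alph σ)) : deltaStar (phi δi qinit Fi) sA w = sA := by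
  induction w with
  | nil => rfl
  | cons a w ih => rw [deltaStar_cons]; exact ih

lemma inr_run (b : Bool) (w : List (Alph σ)) (hw : w ≠ []) :
    deltaStar (phi δi qinit Fi) (Sum.inr b) w = sA := by
  cases w with
  | nil => exact absurd rfl hw
  | cons a w => rw [deltaStar_cons, phi_inr]; exact sink_run δi qinit Fi w

lemma reset_iff (w : List (Alph σ)) :
    w ∈ Syn (phi δi qinit Fi) ↔ ∀ q, deltaStar (phi δi qinit Fi) q w = sA := by
  constructor
  · intro h q
    have := h q sA
    rw [this, sink_run]
  · intro h q q'
    rw [h q, h q']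

lemma noYZ_nil : noYZ ([] : List (Alph σ)) := ⟨by simp, by simp⟩

lemma noYZ_cons {c : Alph σ} {u : List (Alph σ)} (h : noYZ (c :: u)) :
    c ≠ yL ∧ c ≠ zL ∧ noYZ u := by
  obtain ⟨h1, h2⟩ := h
  exact ⟨fun e => h1 (by simp [e]), fun e => h2 (by simp [e]),
    fun m => h1 (List.mem_cons_of_mem _ m), fun m => h2 (List.mem_cons_of_mem _ m)⟩

lemma noYZ_cons_of {c : Alph σ} {u : List (Alph σ)} (hy : c ≠ yL) (hz : c ≠ zL)
    (h : noYZ u) : noYZ (c :: u) := by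
  constructor
  · intro m; rcases List.mem_cons.1 m with e | m
    · exact hy e.symm
    · exact h.1 m
  · intro m; rcases List.mem_cons.1 m with e | m
    · exact hz e.symm
    · exact h.2 m

lemma phi_y (p : StA Qst) : phi δi qinit Fi p yL = sA := by
  rcases p with ⟨i, q⟩ | b
  · simp [phi, yL]
  · rfl

lemma phi_z_eq (i : Fin n) (q : Qst i) :
    phi δi qinit Fi (Sum.inl ⟨i, q⟩) zL = if q ∈ Fi i then sA else hA := by
  simp [phi, zL]

lemma phi_z_inr (p : StA Qst) : ∃ b : Bool, phi δi qinit Fi p zL = Sum.inr b := by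
  rcases p with ⟨i, q⟩ | b
  · rw [phi_z_eq]
    by_cases h : q ∈ Fi i
    · exact ⟨false, by rw [if_pos h]; rfl⟩
    · exact ⟨true, by rw [if_neg h]; rfl⟩
  · exact ⟨false, rfl⟩

lemma run_noYZ {u : List (Alph σ)} (hu : noYZ u) (i : Fin n) (q : Qst i) :
    deltaStar (phi δi qinit Fi) (Sum.inl ⟨i, q⟩) u = Sum.inl ⟨i, gRun δi qinit i q u⟩ := by
  induction u generalizing q with
  | nil => rfl
  | cons c u ih =>
    obtain ⟨hcy, hcz, hu'⟩ := noYZ_cons hu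
    rw [deltaStar_cons]
    rcases c with a | k
    · have hstep : phi δi qinit Fi (Sum.inl ⟨i, q⟩) (Sum.inl a) = Sum.inl ⟨i, δi i q a⟩ := rfl
      rw [hstep, ih hu']
      rfl
    · have hk1 : k ≠ 1 := fun e => hcy (by simp [yL, e])
      have hk2 : k ≠ 2 := fun e => hcz (by simp [zL, e])
      have hk0 : k = 0 := by omega
      subst hk0
      show deltaStar _ (phi δi qinit Fi (Sum.inl ⟨i, q⟩) (Sum.inr 0)) u = _
      have : phi δi qinit Fi (Sum.inl ⟨i, q⟩) (Sum.inr 0) = Sum.inl ⟨i, qinit i⟩ := by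
        simp [phi]
      rw [this, ih hu']
      rfl

lemma run_map (t : List σ) (i : Fin n) (p : Qst i) :
    deltaStar (phi δi qinit Fi) (Sum.inl ⟨i, p⟩) (t.map Sum.inl) =
      Sum.inl ⟨i, deltaStar (δi i) p t⟩ := by
  induction t generalizing p with
  | nil => rfl
  | cons a t ih =>
    rw [List.map_cons, deltaStar_cons, deltaStar_cons]
    exact ih (δi i p a)

lemma decompose (w : List (Alph σ)) :
    noYZ w ∨ ∃ u c v, noYZ u ∧ (c = yL ∨ c = zL) ∧ w = u ++ c :: v := by
  induction w with
  | nil => exact Or.inl noYZ_nil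
  | cons a w ih =>
    by_cases hy : a = yL
    · exact Or.inr ⟨[], a, w, noYZ_nil, Or.inl hy, rfl⟩
    by_cases hz : a = zL
    · exact Or.inr ⟨[], a, w, noYZ_nil, Or.inr hz, rfl⟩
    rcases ih with h | ⟨u, c, v, hu, hc, rfl⟩
    · exact Or.inl (noYZ_cons_of hy hz h)
    · exact Or.inr ⟨a :: u, c, v, noYZ_cons_of hy hz hu, hc, rfl⟩

lemma uniq_split {α : Type} (e : α) :
    ∀ (A B v v' : List α), e ∉ A → e ∉ B → A ++ e :: v = B ++ e :: v' → v = v' := by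
  intro A
  induction A with
  | nil =>
    intro B v v' _ hB h
    cases B with
    | nil => simpa using h
    | cons b B =>
      simp only [List.nil_append, List.cons_append, List.cons.injEq] at h
      exact absurd (h.1 ▸ (List.mem_cons_self : b ∈ b :: B)) hB
  | cons a A ih =>
    intro B v v' hA hB h
    cases B with
    | nil =>
      simp only [List.cons_append, List.nil_append, List.cons.injEq] at h
      exact absurd (h.1 ▸ (List.mem_cons_self : a ∈ a :: A)) (by exact fun m => hA (h.1 ▸ m) )
    | cons b B =>
      simp only [List.cons_append, List.cons.injEq] at h
      exact ih B v v' (fun m => hA (List.mem_cons_of_mem _ m))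
        (fun m => hB (List.mem_cons_of_mem _ m)) h.2

lemma gRun_append (i : Fin n) (q : Qst i) (u v : List (Alph σ)) :
    gRun δi qinit i q (u ++ v) = gRun δi qinit i (gRun δi qinit i q u) v := by
  simp [gRun, List.foldl_append]

lemma extract {u : List (Alph σ)} (hu : noYZ u) :
    ∃ t : List σ, ∀ i, gRun δi qinit i (qinit i) u = deltaStar (δi i) (qinit i) t := by
  induction u using List.reverseRecOn with
  | nil => exact ⟨[], fun i => rfl⟩
  | append_singleton u c ih =>
    have hu' : noYZ u := ⟨fun m => hu.1 (by simp [m]), fun m => hu.2 (by simp [m])⟩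
    obtain ⟨t, ht⟩ := ih hu'
    rcases c with a | k
    · refine ⟨t ++ [a], fun i => ?_⟩
      rw [gRun_append, deltaStar_append, ← ht i]
      rfl
    · refine ⟨[], fun i => ?_⟩
      rw [gRun_append]
      rfl

end Aux

/-- ⋂ᵢ L[Mᵢ] = ∅ iff Syn(𝒜) = I. -/
theorem inter_empty_iff_syn_A_eq_I
    (n : ℕ) (hn : 0 < n) (σ : Type) [Fintype σ]
    (Qst : Fin n → Type) [∀ i, Fintype (Qst i)]
    (δi : ∀ i, Qst i → σ → Qst i) (qinit : ∀ i, Qst i)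
    (Fi : ∀ i, Set (Qst i)) [∀ i, DecidablePred (· ∈ Fi i)]
    (hno : ∀ i (q : Qst i) (a : σ), δi i q a ≠ qinit i)
    (hqF : ∀ i, qinit i ∉ Fi i) :
    (⋂ i, LM δi qinit Fi i) = ∅ ↔ Syn (phi δi qinit Fi) = ISet := by
  constructor
  · -- intersection empty → Syn = I
    intro hempty
    ext w
    constructor
    · intro hw
      rw [reset_iff] at hw
      rcases decompose w with hno2 | ⟨u, c, v, hu, hc, rfl⟩
      · exfalso
        set i0 : Fin n := ⟨0, hn⟩
        have := hw (Sum.inl ⟨i0, qinit i0⟩)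
        rw [run_noYZ δi qinit Fi hno2] at this
        simp [sA] at this
      · rcases hc with rfl | rfl
        · exact Or.inl ⟨u, v, hu, rfl⟩
        · cases v with
          | cons d v => exact Or.inr ⟨u, d :: v, hu, by simp, rfl⟩
          | nil =>
            exfalso
            have key : ∀ i (q : Qst i), gRun δi qinit i q u ∈ Fi i := by
              intro i q
              have h1 := hw (Sum.inl ⟨i, q⟩)
              rw [deltaStar_append, run_noYZ δi qinit Fi hu] at h1
              rw [show deltaStar (phi δi qinit Fi) (Sum.inl ⟨i, gRun δi qinit i q u⟩) [zL]
                  = phi δi qinit Fi (Sum.inl ⟨i, gRun δi qinit i q u⟩) zL from rfl,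
                phi_z_eq] at h1
              by_contra hq
              rw [if_neg hq] at h1
              simp [hA, sA] at h1
            obtain ⟨t, ht⟩ := extract δi qinit hu
            have htmem : t ∈ ⋂ i, LM δi qinit Fi i := by
              rw [Set.mem_iInter]
              intro i
              show deltaStar (δi i) (qinit i) t ∈ Fi i
              rw [← ht i]
              exact key i (qinit i)
            rw [hempty] at htmem
            exact htmem
    · intro hw
      rw [reset_iff]
      rcases hw with ⟨u, v, hu, rfl⟩ | ⟨u, v, hu, hv, rfl⟩
      · intro q
        rw [deltaStar_append, deltaStar_cons, phi_y]
        exact sink_run δi qinit Fi v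
      · intro q
        rw [deltaStar_append, deltaStar_cons]
        obtain ⟨b, hb⟩ := phi_z_inr δi qinit Fi (deltaStar (phi δi qinit Fi) q u)
        rw [hb]
        exact inr_run δi qinit Fi b v hv
  · -- Syn = I → intersection empty
    intro hsyn
    by_contra hne
    obtain ⟨t, ht⟩ := Set.nonempty_iff_ne_empty.2 hne
    rw [Set.mem_iInter] at ht
    set w : List (Alph σ) := (xL :: t.map Sum.inl) ++ [zL] with hwdef
    have hwsyn : w ∈ Syn (phi δi qinit Fi) := by
      rw [reset_iff]
      intro q
      rcases q with ⟨i, p⟩ | b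
      · rw [hwdef, List.cons_append, deltaStar_cons]
        rw [show phi δi qinit Fi (Sum.inl ⟨i, p⟩) xL = Sum.inl ⟨i, qinit i⟩ from by
          simp [phi, xL]]
        rw [deltaStar_append, run_map]
        rw [show deltaStar (phi δi qinit Fi)
            (Sum.inl ⟨i, deltaStar (δi i) (qinit i) t⟩) [zL]
            = phi δi qinit Fi (Sum.inl ⟨i, deltaStar (δi i) (qinit i) t⟩) zL from rfl,
          phi_z_eq, if_pos (show deltaStar (δi i) (qinit i) t ∈ Fi i from ht i)]
      · rw [hwdef, List.cons_append, deltaStar_cons, phi_inr]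
        exact sink_run δi qinit Fi _
    rw [hsyn] at hwsyn
    have hynw : yL ∉ w := by
      rw [hwdef]
      intro hm
      simp only [List.mem_append, List.mem_cons, List.mem_map, List.mem_singleton] at hm
      rcases hm with (h | ⟨a, _, h⟩) | h
      · exact absurd h (by simp [yL, xL])
      · exact absurd h (by simp [yL])
      · exact absurd h (by simp [yL, zL])
    have hznpre : zL ∉ (xL :: t.map Sum.inl) := by
      intro hm
      simp only [List.mem_cons, List.mem_map] at hm
      rcases hm with h | ⟨a, _, h⟩
      · exact absurd h (by simp [zL, xL])
      · exact absurd h.symm (by simp [zL])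
    rcases hwsyn with ⟨u, v, hu, heq⟩ | ⟨u, v, hu, hv, heq⟩
    · exact hynw (heq ▸ (by simp : yL ∈ u ++ yL :: v))
    · have : ([] : List (Alph σ)) = v := by
        refine uniq_split zL (xL :: t.map Sum.inl) u [] v hznpre hu.2 ?_
        rw [← heq, hwdef]
      exact hv this.symm
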